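/- Every monic polynomial C ∈ ℍ[t] of degree n over the real quaternions admits a factorization C = (t − q₁)(t − q₂)⋯(t − qₙ) into monic linear factors with quaternions q₁, …, qₙ ∈ ℍ. -/

import Mathlib

set_option linter.dupNamespace false

noncomputable section
open Polynomial

/-- The real quaternions ℍ. -/
abbrev Quat := Quaternion ℝ

namespace Stmt7Aux

/-- Coefficient-wise star of a quaternion polynomial. -/
def spol (p : Quat[X]) : Quat[X] :=
  ⟨AddMonoidAlgebra.ofCoeff (p.toFinsupp.coeff.mapRange star (star_zero Quat))⟩

@[simp] lemma coeff_spol (p : Quat[X]) (k : ℕ) : (spol p).coeff k = star (p.coeff k) := by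
  rcases p with ⟨f⟩
  simp [spol, Polynomial.coeff]

lemma spol_add (p q : Quat[X]) : spol (p + q) = spol p + spol q := by
  rcases p with ⟨f⟩; rcases q with ⟨g⟩
  refine Polynomial.ext fun k => ?_
  simp [coeff_spol, star_add]

lemma spol_monomial (n : ℕ) (a : Quat) : spol (monomial n a) = monomial n (star a) := by
  refine Polynomial.ext fun k => ?_
  simp only [coeff_spol, coeff_monomial]
  split_ifs <;> simp

end Stmt7Aux

namespace Stmt7Aux


lemma conj_pow (c x : Quat) (hc : c ≠ 0) : ∀ i : ℕ, (c * x * c⁻¹) ^ i = c * x ^ i * c⁻¹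
  | 0 => by simp [mul_inv_cancel₀ hc]
  | (i+1) => by
      rw [pow_succ, conj_pow c x hc i, pow_succ]
      calc c * x ^ i * c⁻¹ * (c * x * c⁻¹)
          = c * x ^ i * (c⁻¹ * c) * (x * c⁻¹) := by noncomm_ring
        _ = c * (x ^ i * x) * c⁻¹ := by rw [inv_mul_cancel₀ hc, mul_one]; noncomm_ring

lemma eval_mul_eq (p q : Quat[X]) (x : Quat) :
    (p * q).eval x = p.sum fun i a => a * q.eval x * x ^ i := by
  induction p using Polynomial.induction_on' with
  | add f g hf hg =>
      rw [add_mul, eval_add, hf, hg,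
        Polynomial.sum_add_index _ _ _ (by simp) (by intros; simp [add_mul])]
  | monomial n a =>
      rw [Polynomial.sum_monomial_index _ _ (by simp), ← Polynomial.C_mul_X_pow_eq_monomial,
        mul_assoc, Polynomial.X_pow_mul, ← mul_assoc, eval_mul_X_pow, eval_C_mul, mul_assoc]

lemma eval_mul_of_ne_zero (p q : Quat[X]) (x : Quat) (hc : q.eval x ≠ 0) :
    (p * q).eval x = p.eval (q.eval x * x * (q.eval x)⁻¹) * q.eval x := by
  set c := q.eval x with hcdef
  have key : p.eval (c * x * c⁻¹) * c = p.sum fun i a => a * c * x ^ i := by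
    rw [eval_eq_sum, Polynomial.sum, Polynomial.sum, Finset.sum_mul]
    refine Finset.sum_congr rfl fun i _ => ?_
    rw [conj_pow _ _ hc, mul_assoc, mul_assoc, mul_assoc, inv_mul_cancel₀ hc, mul_one, mul_assoc]
  rw [eval_mul_eq, ← hcdef, ← key]

lemma exists_right (p : Quat[X]) (x : Quat) :
    ∃ D, p = D * (X - Polynomial.C x) + Polynomial.C (p.eval x) := by
  induction p using Polynomial.induction_on' with
  | add f g hf hg =>
      obtain ⟨D1, h1⟩ := hf; obtain ⟨D2, h2⟩ := hg
      refine ⟨D1 + D2, ?_⟩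
      rw [eval_add, C_add]
      conv_lhs => rw [h1, h2]
      noncomm_ring
  | monomial n a =>
      refine ⟨Polynomial.C a * ∑ i ∈ Finset.range n, X ^ i * (Polynomial.C x) ^ (n - 1 - i), ?_⟩
      have hcomm : Commute (X : Quat[X]) (Polynomial.C x) :=
        Polynomial.commute_X (Polynomial.C x)
      rw [eval_monomial, mul_assoc, hcomm.geom_sum₂_mul, ← Polynomial.C_mul_X_pow_eq_monomial,
        ← map_pow, mul_sub, ← map_mul]
      noncomm_ring

lemma exists_left (p : Quat[X]) (x : Quat) :
    ∃ D, p = (X - Polynomial.C x) * D + Polynomial.C (p.sum fun i a => x ^ i * a) := by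
  induction p using Polynomial.induction_on' with
  | add f g hf hg =>
      obtain ⟨D1, h1⟩ := hf; obtain ⟨D2, h2⟩ := hg
      refine ⟨D1 + D2, ?_⟩
      rw [Polynomial.sum_add_index _ _ _ (by simp) (by intros; simp [mul_add]), C_add]
      conv_lhs => rw [h1, h2]
      noncomm_ring
  | monomial n a =>
      refine ⟨(∑ i ∈ Finset.range n, X ^ i * (Polynomial.C x) ^ (n - 1 - i)) * Polynomial.C a, ?_⟩
      have hcomm : Commute (X : Quat[X]) (Polynomial.C x) :=
        Polynomial.commute_X (Polynomial.C x)
      rw [Polynomial.sum_monomial_index _ _ (by simp), ← mul_assoc, hcomm.mul_geom_sum₂,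
        ← Polynomial.C_mul_X_pow_eq_monomial, ← map_pow, sub_mul, ← map_mul]
      have hx : (X : Quat[X]) ^ n * Polynomial.C a = Polynomial.C a * X ^ n :=
        Polynomial.X_pow_mul ..
      rw [hx]; noncomm_ring

lemma star_eval_spol (p : Quat[X]) (w : Quat) :
    star ((spol p).eval w) = p.sum fun i a => (star w) ^ i * a := by
  induction p using Polynomial.induction_on' with
  | add f g hf hg =>
      rw [spol_add, eval_add, star_add, hf, hg,
        Polynomial.sum_add_index _ _ _ (by simp) (by intros; simp [mul_add])]
  | monomial n a =>
      rw [spol_monomial, eval_monomial, Polynomial.sum_monomial_index _ _ (by simp),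
        star_mul, star_pow, star_star]

end Stmt7Aux

namespace Stmt7Aux

lemma eq_coe_of_star_eq (x : Quat) (h : star x = x) : (algebraMap ℝ Quat) x.re = x := by
  have h1 : -x.imI = x.imI := congrArg QuaternionAlgebra.imI h
  have h2 : -x.imJ = x.imJ := congrArg QuaternionAlgebra.imJ h
  have h3 : -x.imK = x.imK := congrArg QuaternionAlgebra.imK h
  rw [Quaternion.algebraMap_def]
  ext <;> simp <;> linarith

lemma exists_root_quat (p : Quat[X]) (hm : p.Monic) (hd : 1 ≤ p.natDegree) :
    ∃ x : Quat, p.eval x = 0 ∨ (p.sum fun i a => x ^ i * a) = 0 := by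
  have hspol_ne : spol p ≠ 0 := by
    intro h
    have h0 : (spol p).coeff p.natDegree = 0 := by rw [h]; simp
    rw [coeff_spol, hm.coeff_natDegree] at h0
    simp at h0
  set N := p * spol p with hN
  have hsa : ∀ k, star (N.coeff k) = N.coeff k := by
    intro k
    rw [hN, Polynomial.coeff_mul, star_sum,
      ← Finset.Nat.sum_antidiagonal_swap
        (f := fun ij => star (p.coeff ij.1 * (spol p).coeff ij.2))]
    refine Finset.sum_congr rfl fun ij _ => ?_
    simp [coeff_spol, star_mul]
  have hreal : ∀ k, N.coeff k ∈ Set.range (algebraMap ℝ Quat) :=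
    fun k => ⟨(N.coeff k).re, eq_coe_of_star_eq _ (hsa k)⟩
  obtain ⟨N₀, hN₀⟩ := (Polynomial.mem_lifts _).mp
    ((Polynomial.lifts_iff_coeff_lifts N).mpr hreal)
  have hNdeg : 1 ≤ N.natDegree := by
    rw [hN, hm.natDegree_mul' hspol_ne]; omega
  have hdeg0 : 1 ≤ N₀.natDegree := le_trans hNdeg (hN₀ ▸ Polynomial.natDegree_map_le)
  have hdeg1 : 0 < (N₀.map (algebraMap ℝ ℂ)).degree := by
    rw [Polynomial.degree_map_eq_of_injective (algebraMap ℝ ℂ).injective]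
    exact Polynomial.natDegree_pos_iff_degree_pos.mp (by omega)
  obtain ⟨z, hz⟩ := Complex.exists_root hdeg1
  have hz' : Polynomial.aeval z N₀ = 0 := by
    rwa [Polynomial.aeval_def, ← Polynomial.eval_map]
  have hqi2 : (⟨0,1,0,0⟩ : Quat) * ⟨0,1,0,0⟩ = -1 := by
    ext <;> simp [QuaternionAlgebra.re_mul, QuaternionAlgebra.imI_mul,
      QuaternionAlgebra.imJ_mul, QuaternionAlgebra.imK_mul]
  set φ : ℂ →ₐ[ℝ] Quat := Complex.liftAux _ hqi2 with hφ
  set w := φ z with hw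
  have hNw : N.eval w = 0 := by
    rw [← hN₀, Polynomial.eval_map, ← Polynomial.aeval_def, hw,
      Polynomial.aeval_algHom_apply, hz', map_zero]
  by_cases hc : (spol p).eval w = 0
  · exact ⟨star w, Or.inr (by rw [← star_eval_spol, hc, star_zero])⟩
  · have hkey := eval_mul_of_ne_zero p (spol p) w hc
    rw [← hN, hNw] at hkey
    rcases mul_eq_zero.mp hkey.symm with h | h
    · exact ⟨_, Or.inl h⟩
    · exact absurd h hc

lemma step (C : Quat[X]) (hm : C.Monic) (m : ℕ) (hdeg : C.natDegree = m + 1) :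
    ∃ (x : Quat) (D : Quat[X]), D.Monic ∧ D.natDegree = m ∧
      (C = (X - Polynomial.C x) * D ∨ C = D * (X - Polynomial.C x)) := by
  obtain ⟨x, hx | hx⟩ := exists_root_quat C hm (by omega)
  · obtain ⟨D, hD⟩ := exists_right C x
    rw [hx, Polynomial.C_0, add_zero] at hD
    have hmD : D.Monic := Polynomial.Monic.of_mul_monic_right (monic_X_sub_C x) (hD ▸ hm)
    have hdD : D.natDegree = m := by
      have h2 := hmD.natDegree_mul (monic_X_sub_C x)
      rw [← hD, hdeg, natDegree_X_sub_C] at h2; omega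
    exact ⟨x, D, hmD, hdD, Or.inr hD⟩
  · obtain ⟨D, hD⟩ := exists_left C x
    rw [hx, Polynomial.C_0, add_zero] at hD
    have hmD : D.Monic := Polynomial.Monic.of_mul_monic_left (monic_X_sub_C x) (hD ▸ hm)
    have hdD : D.natDegree = m := by
      have h2 := (monic_X_sub_C x).natDegree_mul hmD
      rw [← hD, hdeg, natDegree_X_sub_C] at h2; omega
    exact ⟨x, D, hmD, hdD, Or.inl hD⟩

end Stmt7Aux

/-- Every monic polynomial of degree n over the quaternions admits a
factorization into monic linear factors `(t − q₁)(t − q₂)⋯(t − qₙ)` (ordered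
product, since ℍ[t] is noncommutative). -/
theorem stmt7 (n : ℕ) (C : Quat[X]) (hmonic : C.Monic) (hdeg : C.natDegree = n) :
    ∃ q : Fin n → Quat,
      C = (List.ofFn fun i => X - Polynomial.C (q i)).prod := by
  induction n generalizing C with
  | zero =>
      exact ⟨fun i => i.elim0, by simpa using hmonic.natDegree_eq_zero.mp hdeg⟩
  | succ m ih =>
      obtain ⟨x, D, hmD, hdD, hcase⟩ := Stmt7Aux.step C hmonic m hdeg
      obtain ⟨q', hq'⟩ := ih D hmD hdD
      rcases hcase with h | h
      · refine ⟨Fin.cons x q', ?_⟩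
        rw [List.ofFn_succ]
        simp only [Fin.cons_zero, Fin.cons_succ]
        rw [List.prod_cons, ← hq', h]
      · refine ⟨Fin.snoc q' x, ?_⟩
        rw [List.ofFn_succ']
        simp only [Fin.snoc_castSucc, Fin.snoc_last]
        rw [List.prod_concat, ← hq', h]
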